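/- arXiv:2204.08044 — 8 statements merged into one kernel-verified Lean document; each statement's English description precedes it below -/
import Mathlib

section
/- Consider an IDV social choice setting in which every valuation v_i is auto-linear. If a randomized social choice function f : S → Δ(𝒜) is implementable (i.e., some payments p make (f, p) ex-post IC-IR), then the profile v satisfies f-single-crossing. -/
open Finset

noncomputable section

/-- The signal profile lies in the signal space `[0,1]^n`. -/
def InSig {n : ℕ} (s : Fin n → ℝ) : Prop := ∀ i, s i ∈ Set.Icc (0 : ℝ) 1

/-- Expected value `⟨u, d⟩ = ∑ a, d a · u a` of the vector `u` under the distribution `d`. -/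
def expVal {A : Type*} [Fintype A] (u d : A → ℝ) : ℝ := ∑ a, d a * u a

variable {n : ℕ} {A : Type*} [Fintype A]

/-- Valuations are nonnegative and nondecreasing in every signal coordinate. -/
def ValidVals (v : Fin n → A → (Fin n → ℝ) → ℝ) : Prop :=
  (∀ i a (s : Fin n → ℝ), InSig s → 0 ≤ v i a s) ∧
  (∀ i a (j : Fin n) (s : Fin n → ℝ), InSig s → ∀ t t' : ℝ, t ∈ Set.Icc (0 : ℝ) 1 →
    t' ∈ Set.Icc (0 : ℝ) 1 → t ≤ t' →
    v i a (Function.update s j t) ≤ v i a (Function.update s j t'))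

/-- `f` maps every signal profile to a probability distribution over the alternatives. -/
def IsDistr (f : (Fin n → ℝ) → A → ℝ) : Prop :=
  ∀ s : Fin n → ℝ, InSig s → (∀ a, 0 ≤ f s a) ∧ ∑ a, f s a = 1

/-- `v i` is auto-linear: for every alternative and every fixed `s₋ᵢ`, the map
`sᵢ ↦ v i a (sᵢ, s₋ᵢ)` is affine on `[0,1]`. -/
def AutoLinear (v : Fin n → A → (Fin n → ℝ) → ℝ) : Prop :=
  ∀ i a (s : Fin n → ℝ), InSig s → ∃ c d : ℝ,
    ∀ t ∈ Set.Icc (0 : ℝ) 1, v i a (Function.update s i t) = c * t + d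

/-- `dv i a s` is the derivative of `v i a` with respect to agent `i`'s own signal at `s`. -/
def IsOwnDeriv (v dv : Fin n → A → (Fin n → ℝ) → ℝ) : Prop :=
  ∀ i a (s : Fin n → ℝ), InSig s →
    HasDerivWithinAt (fun t => v i a (Function.update s i t)) (dv i a s)
      (Set.Icc (0 : ℝ) 1) (s i)

/-- The mechanism `(f, p)` is ex-post IC-IR. -/
def ExPostICIR (v : Fin n → A → (Fin n → ℝ) → ℝ) (f : (Fin n → ℝ) → A → ℝ)
    (p : Fin n → (Fin n → ℝ) → ℝ) : Prop :=
  ∀ i (s : Fin n → ℝ), InSig s →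
    (∀ b ∈ Set.Icc (0 : ℝ) 1,
      expVal (fun a => v i a s) (f s) - p i s ≥
        expVal (fun a => v i a s) (f (Function.update s i b)) -
          p i (Function.update s i b)) ∧
    expVal (fun a => v i a s) (f s) - p i s ≥ 0

/-- The profile `v` satisfies `f`-single-crossing: for all `i`, `s₋ᵢ` and signals
`sᵢ < z`, `⟨∂vᵢ/∂sᵢ(sᵢ, s₋ᵢ), f(z, s₋ᵢ)⟩ ≥ ⟨∂vᵢ/∂sᵢ(sᵢ, s₋ᵢ), f(sᵢ, s₋ᵢ)⟩`. -/
def FSC (dv : Fin n → A → (Fin n → ℝ) → ℝ) (f : (Fin n → ℝ) → A → ℝ) : Prop :=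
  ∀ i (s : Fin n → ℝ), InSig s → ∀ z ∈ Set.Icc (0 : ℝ) 1, s i < z →
    expVal (fun a => dv i a s) (f (Function.update s i z)) ≥
      expVal (fun a => dv i a s) (f s)

/-- With auto-linear valuations, if `f` is implementable (some payments
make `(f, p)` ex-post IC-IR), then the profile `v` satisfies `f`-single-crossing. -/
theorem autolinear_implementable_implies_fsc
    (v dv : Fin n → A → (Fin n → ℝ) → ℝ)
    (f : (Fin n → ℝ) → A → ℝ)
    (hv : ValidVals v) (hlin : AutoLinear v) (hdv : IsOwnDeriv v dv)
    (hf : IsDistr f)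
    (himpl : ∃ p : Fin n → (Fin n → ℝ) → ℝ, ExPostICIR v f p) :
    FSC dv f := by
  obtain ⟨p, hp⟩ := himpl
  intro i s hs z hz hlt
  set t := s i with ht
  have hsi : t ∈ Set.Icc (0:ℝ) 1 := hs i
  set s' := Function.update s i z with hs'
  have hs'sig : InSig s' := by
    intro j
    by_cases h : j = i
    · subst h; simpa [hs'] using hz
    · simpa [hs', Function.update_of_ne h] using hs j
  have hupd_self : Function.update s i t = s := Function.update_eq_self i s
  have hupd2 : Function.update s' i t = s := by
    rw [hs', Function.update_idem, hupd_self]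
  -- the two IC inequalities
  have ic1 := (hp i s hs).1 z hz
  have ic2 := (hp i s' hs'sig).1 t hsi
  rw [hupd2] at ic2
  -- key per-alternative identity
  have key : ∀ a, v i a s' - v i a s = dv i a s * (z - t) := by
    intro a
    obtain ⟨c, d, hcd⟩ := hlin i a s hs
    have hderiv := hdv i a s hs
    have haff : HasDerivWithinAt (fun u : ℝ => c * u + d) c (Set.Icc (0:ℝ) 1) t := by
      simpa using (((hasDerivAt_id t).const_mul c).add_const d).hasDerivWithinAt
    have hcongr : HasDerivWithinAt (fun u : ℝ => c * u + d) (dv i a s)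
        (Set.Icc (0:ℝ) 1) t := by
      refine hderiv.congr (fun u hu => (hcd u hu).symm) ?_
      exact (hcd t hsi).symm
    have hud : UniqueDiffWithinAt ℝ (Set.Icc (0:ℝ) 1) t :=
      (uniqueDiffOn_Icc (by norm_num : (0:ℝ) < 1)) t hsi
    have hdvc : dv i a s = c := by
      rw [← hcongr.derivWithin hud, haff.derivWithin hud]
    have h1 : v i a s' = c * z + d := hcd z hz
    have h2 : v i a s = c * t + d := by rw [← hupd_self]; exact hcd t hsi
    rw [h1, h2, hdvc]; ring
  -- combine the IC inequalities
  have hsum : expVal (fun a => v i a s') (f s') - expVal (fun a => v i a s) (f s') ≥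
      expVal (fun a => v i a s') (f s) - expVal (fun a => v i a s) (f s) := by linarith
  have hE : ∀ g : A → ℝ, expVal (fun a => v i a s') g - expVal (fun a => v i a s) g =
      (z - t) * expVal (fun a => dv i a s) g := by
    intro g
    simp only [expVal, Finset.mul_sum, ← Finset.sum_sub_distrib]
    refine Finset.sum_congr rfl fun a _ => ?_
    rw [← mul_sub, key a]; ring
  rw [hE (f s'), hE (f s)] at hsum
  have hpos : (0:ℝ) < z - t := by linarith
  exact le_of_mul_le_mul_left hsum hpos
end
end

section
/- Consider an IDV social choice setting in which every valuation v_i is decomposable and differentiable in its own signal s_i. If a randomized social choice function f : S → Δ(𝒜) is implementable (i.e., some payments p make (f, p) ex-post IC-IR), then the profile v satisfies f-single-crossing. -/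
open Finset

noncomputable section

variable {n : ℕ} {A : Type*} [Fintype A]

/-- `v i` is decomposable: `v i a s = v̂ i s * h a s₋ᵢ + g a s₋ᵢ` with `v̂, h ≥ 0`, where
`h` and `g` depend only on the signals of the agents other than `i`. -/
def Decomposable (v : Fin n → A → (Fin n → ℝ) → ℝ) : Prop :=
  ∀ i, ∃ (vh : (Fin n → ℝ) → ℝ) (h g : A → (Fin n → ℝ) → ℝ),
    (∀ s : Fin n → ℝ, InSig s → 0 ≤ vh s) ∧
    (∀ a (s : Fin n → ℝ), InSig s → 0 ≤ h a s) ∧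
    (∀ a (s : Fin n → ℝ), InSig s → ∀ t ∈ Set.Icc (0 : ℝ) 1,
      h a (Function.update s i t) = h a s) ∧
    (∀ a (s : Fin n → ℝ), InSig s → ∀ t ∈ Set.Icc (0 : ℝ) 1,
      g a (Function.update s i t) = g a s) ∧
    (∀ a (s : Fin n → ℝ), InSig s → v i a s = vh s * h a s + g a s)

lemma insig_update {n : ℕ} {s : Fin n → ℝ} (hs : InSig s) (i : Fin n) {t : ℝ}
    (ht : t ∈ Set.Icc (0:ℝ) 1) : InSig (Function.update s i t) := by
  intro j
  rcases eq_or_ne j i with rfl | hji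
  · simpa using ht
  · simpa [Function.update_apply, hji] using hs j

/-- With decomposable valuations, if `f` is implementable (some payments
make `(f, p)` ex-post IC-IR), then the profile `v` satisfies `f`-single-crossing. -/
theorem decomposable_implementable_implies_fsc
    (v dv : Fin n → A → (Fin n → ℝ) → ℝ)
    (f : (Fin n → ℝ) → A → ℝ)
    (hv : ValidVals v) (hdec : Decomposable v) (hdv : IsOwnDeriv v dv)
    (hf : IsDistr f)
    (himpl : ∃ p : Fin n → (Fin n → ℝ) → ℝ, ExPostICIR v f p) :
    FSC dv f := by
  intro i s hs z hz hlt
  obtain ⟨p, hp⟩ := himpl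
  obtain ⟨vh, h, g, hvh0, hh0, hhc, hgc, hdecomp⟩ := hdec i
  set s' := Function.update s i z with hs'def
  have hs' : InSig s' := insig_update hs i hz
  have hsi : s i ∈ Set.Icc (0:ℝ) 1 := hs i
  have hssi : Function.update s i (s i) = s := Function.update_eq_self i s
  have hhc' : ∀ a, h a s' = h a s := fun a => hhc a s hs z hz
  have hgc' : ∀ a, g a s' = g a s := fun a => hgc a s hs z hz
  have hvt : ∀ a, ∀ t ∈ Set.Icc (0:ℝ) 1,
      v i a (Function.update s i t) = vh (Function.update s i t) * h a s + g a s := by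
    intro a t ht
    rw [hdecomp a _ (insig_update hs i ht), hhc a s hs t ht, hgc a s hs t ht]
  have hderiv : ∀ a, HasDerivWithinAt
      (fun t => vh (Function.update s i t) * h a s + g a s) (dv i a s)
      (Set.Icc (0:ℝ) 1) (s i) := fun a =>
    (hdv i a s hs).congr (fun t ht => (hvt a t ht).symm) (hvt a (s i) hsi).symm
  have hud : UniqueDiffWithinAt ℝ (Set.Icc (0:ℝ) 1) (s i) :=
    (uniqueDiffOn_Icc (zero_lt_one)) (s i) hsi
  by_cases hall : ∀ a, h a s = 0
  · -- all h vanish: dv ≡ 0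
    have hdz : ∀ a : A, dv i a s = 0 := by
      intro a
      have h1 : HasDerivWithinAt (fun _ : ℝ => g a s) (dv i a s)
          (Set.Icc (0:ℝ) 1) (s i) :=
        (hderiv a).congr (fun t _ => by simp [hall a]) (by simp [hall a])
      rw [← h1.derivWithin hud,
        (hasDerivWithinAt_const (s i) (Set.Icc (0:ℝ) 1) (g a s)).derivWithin hud]
    simp [expVal, hdz]
  · push_neg at hall
    obtain ⟨a0, ha0⟩ := hall
    have hH0 : 0 < h a0 s := lt_of_le_of_ne (hh0 a0 s hs) (Ne.symm ha0)
    have hHne : h a0 s ≠ 0 := hH0.ne'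
    set c : ℝ := dv i a0 s / h a0 s with hc
    have hVmono : ∀ t ∈ Set.Icc (0:ℝ) 1, ∀ t' ∈ Set.Icc (0:ℝ) 1, t ≤ t' →
        vh (Function.update s i t) ≤ vh (Function.update s i t') := by
      intro t ht t' ht' htt
      have hmono := hv.2 i a0 i s hs t t' ht ht' htt
      rw [hvt a0 t ht, hvt a0 t' ht'] at hmono
      have h3 : vh (Function.update s i t) * h a0 s
          ≤ vh (Function.update s i t') * h a0 s := by linarith
      exact le_of_mul_le_mul_right h3 hH0
    have hVc : HasDerivWithinAt (fun t => vh (Function.update s i t)) c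
        (Set.Icc (0:ℝ) 1) (s i) := by
      have h1 := ((hderiv a0).sub_const (g a0 s)).div_const (h a0 s)
      refine h1.congr (fun t _ => ?_) ?_ <;> field_simp <;> ring
    have hdceq : ∀ a, dv i a s = c * h a s := by
      intro a
      have h2 : HasDerivWithinAt (fun t => vh (Function.update s i t) * h a s + g a s)
          (c * h a s) (Set.Icc (0:ℝ) 1) (s i) := (hVc.mul_const _).add_const _
      rw [← (hderiv a).derivWithin hud, h2.derivWithin hud]
    have hIoc : Set.Ioc (s i) z ⊆ Set.Icc (0:ℝ) 1 := by
      intro t ht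
      exact ⟨le_trans hsi.1 ht.1.le, le_trans ht.2 hz.2⟩
    have hc0 : 0 ≤ c := by
      have htend := hasDerivWithinAt_iff_tendsto_slope.mp (hVc.mono hIoc)
      rw [Set.diff_singleton_eq_self (by simp)] at htend
      haveI hnb : (nhdsWithin (s i) (Set.Ioc (s i) z)).NeBot := by
        rw [← mem_closure_iff_nhdsWithin_neBot, closure_Ioc hlt.ne]
        exact ⟨le_refl _, hlt.le⟩
      refine ge_of_tendsto htend ?_
      filter_upwards [self_mem_nhdsWithin] with t ht
      have h1 : vh s ≤ vh (Function.update s i t) := by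
        have := hVmono (s i) hsi t (hIoc ht) ht.1.le
        rwa [hssi] at this
      show (0:ℝ) ≤ slope (fun t => vh (Function.update s i t)) (s i) t
      rw [slope_def_field]
      have h2 : vh (Function.update s i (s i)) = vh s := by rw [hssi]
      rw [h2]
      exact div_nonneg (sub_nonneg.2 h1) (sub_nonneg.2 ht.1.le)
    have hVz : vh s ≤ vh s' := by
      have := hVmono (s i) hsi z hz hlt.le
      rwa [hssi] at this
    rcases eq_or_lt_of_le hVz with heq | hltv
    · -- vh constant on [s i, z] ⇒ c = 0
      have hsub : Set.Icc (s i) z ⊆ Set.Icc (0:ℝ) 1 := by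
        intro t ht
        exact ⟨le_trans hsi.1 ht.1, le_trans ht.2 hz.2⟩
      have hconst : ∀ t ∈ Set.Icc (s i) z, vh (Function.update s i t) = vh s := by
        intro t ht
        have hti : t ∈ Set.Icc (0:ℝ) 1 := hsub ht
        have h1 : vh s ≤ vh (Function.update s i t) := by
          have := hVmono (s i) hsi t hti ht.1
          rwa [hssi] at this
        have h2 : vh (Function.update s i t) ≤ vh s' := hVmono t hti z hz ht.2
        rw [← heq] at h2
        exact le_antisymm h2 h1
      have hV2 : HasDerivWithinAt (fun _ : ℝ => vh s) c (Set.Icc (s i) z) (s i) :=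
        (hVc.mono hsub).congr (fun t ht => (hconst t ht).symm)
          (hconst (s i) ⟨le_refl _, hlt.le⟩).symm
      have hud2 : UniqueDiffWithinAt ℝ (Set.Icc (s i) z) (s i) :=
        (uniqueDiffOn_Icc hlt) (s i) ⟨le_refl _, hlt.le⟩
      have hc0' : c = 0 := by
        rw [← hV2.derivWithin hud2,
          (hasDerivWithinAt_const (s i) (Set.Icc (s i) z) (vh s)).derivWithin hud2]
      simp [expVal, hdceq, hc0']
    · -- strict increase: use IC both ways
      have hevs : ∀ d : A → ℝ, expVal (fun a => v i a s) d
          = vh s * (∑ a, d a * h a s) + ∑ a, d a * g a s := by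
        intro d
        calc (∑ a, d a * v i a s)
            = ∑ a, (vh s * (d a * h a s) + d a * g a s) := by
              refine Finset.sum_congr rfl fun a _ => ?_
              rw [hdecomp a s hs]; ring
          _ = _ := by rw [Finset.sum_add_distrib, ← Finset.mul_sum]
      have hevs' : ∀ d : A → ℝ, expVal (fun a => v i a s') d
          = vh s' * (∑ a, d a * h a s) + ∑ a, d a * g a s := by
        intro d
        calc (∑ a, d a * v i a s')
            = ∑ a, (vh s' * (d a * h a s) + d a * g a s) := by
              refine Finset.sum_congr rfl fun a _ => ?_
              rw [hdecomp a s' hs', hhc' a, hgc' a]; ring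
          _ = _ := by rw [Finset.sum_add_distrib, ← Finset.mul_sum]
      have h1 := (hp i s hs).1 z hz
      have h2 := (hp i s' hs').1 (s i) hsi
      rw [show Function.update s' i (s i) = s by
        rw [hs'def, Function.update_idem, hssi]] at h2
      rw [← hs'def] at h1
      rw [hevs (f s), hevs (f s')] at h1
      rw [hevs' (f s'), hevs' (f s)] at h2
      have key : (∑ a, f s a * h a s) ≤ ∑ a, f s' a * h a s := by
        by_contra hcon
        push_neg at hcon
        nlinarith [mul_pos (sub_pos.2 hltv) (sub_pos.2 hcon)]
      simp only [expVal, hdceq]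
      have hsum : ∀ d : A → ℝ, (∑ a, d a * (c * h a s)) = c * ∑ a, d a * h a s := by
        intro d
        rw [Finset.mul_sum]
        exact Finset.sum_congr rfl fun a _ => by ring
      rw [hsum, hsum]
      exact mul_le_mul_of_nonneg_left key hc0
end
end

section
/- Consider an IDV social choice setting in which every valuation v_i is differentiable in its own signal s_i, and let f : S → Δ(𝒜) be a randomized social choice function. If the profile v satisfies weak f-single-crossing, then f satisfies weak monotonicity (W-Mon). -/
open Finset

noncomputable section

variable {n : ℕ} {A : Type*} [Fintype A]

/-- The profile `v` satisfies weak `f`-single-crossing: for all `i`, `s` and `z ∈ Sᵢ`,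
`⟨vᵢ(z, s₋ᵢ) − vᵢ(s), f(z, s₋ᵢ)⟩ ≥ ∫_{sᵢ}^{z} ⟨∂vᵢ/∂sᵢ(t, s₋ᵢ), f(t, s₋ᵢ)⟩ dt`. -/
def WeakFSC (v dv : Fin n → A → (Fin n → ℝ) → ℝ) (f : (Fin n → ℝ) → A → ℝ) : Prop :=
  ∀ i (s : Fin n → ℝ), InSig s → ∀ z ∈ Set.Icc (0 : ℝ) 1,
    expVal (fun a => v i a (Function.update s i z) - v i a s) (f (Function.update s i z)) ≥
      ∫ t in (s i)..z,
        expVal (fun a => dv i a (Function.update s i t)) (f (Function.update s i t))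

/-- `f` satisfies weak monotonicity (W-Mon):
`⟨vᵢ(z, s₋ᵢ) − vᵢ(s), f(z, s₋ᵢ) − f(s)⟩ ≥ 0`. -/
def WMon (v : Fin n → A → (Fin n → ℝ) → ℝ) (f : (Fin n → ℝ) → A → ℝ) : Prop :=
  ∀ i (s : Fin n → ℝ), InSig s → ∀ z ∈ Set.Icc (0 : ℝ) 1,
    expVal (fun a => v i a (Function.update s i z) - v i a s)
      (fun a => f (Function.update s i z) a - f s a) ≥ 0

/-- If the profile `v` satisfies weak `f`-single-crossing, then `f`
satisfies weak monotonicity (W-Mon). -/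
theorem weak_fsc_implies_wmon
    (v dv : Fin n → A → (Fin n → ℝ) → ℝ)
    (f : (Fin n → ℝ) → A → ℝ)
    (hv : ValidVals v) (hdv : IsOwnDeriv v dv) (hf : IsDistr f)
    (hwfsc : WeakFSC v dv f) :
    WMon v f := by
  intro i s hs z hz
  have hs' : InSig (Function.update s i z) := by
    intro j
    by_cases h : j = i
    · subst h; simp [hz]
    · rw [Function.update_of_ne h]; exact hs j
  have h1 := hwfsc i s hs z hz
  have h2 := hwfsc i (Function.update s i z) hs' (s i) (hs i)
  simp only [Function.update_idem, Function.update_eq_self] at h2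
  rw [intervalIntegral.integral_symm] at h2
  rw [ge_iff_le] at h1 h2 ⊢
  unfold expVal at *
  have key : ∑ a, (f (Function.update s i z) a - f s a) * (v i a (Function.update s i z) - v i a s)
      = (∑ a, f (Function.update s i z) a * (v i a (Function.update s i z) - v i a s))
        + (∑ a, f s a * (v i a s - v i a (Function.update s i z))) := by
    rw [← Finset.sum_add_distrib]
    exact Finset.sum_congr rfl fun a _ => by ring
  rw [key]
  simp only [Function.update_self] at h2
  beta_reduce at h1 h2
  linarith
end
end

section
/- Consider an IDV social choice setting in which every valuation v_i is decomposable and differentiable in its own signal s_i, and let f : S → Δ(𝒜) be a randomized social choice function. If f satisfies weak monotonicity (W-Mon), then the profile v satisfies f-single-crossing. -/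
open Finset

noncomputable section

variable {n : ℕ} {A : Type*} [Fintype A]

/-- Derivatives within `Icc a b` (with `a < b`) are unique. -/
lemma hasDerivWithinAt_Icc_unique {a b x d₁ d₂ : ℝ} {φ : ℝ → ℝ} (hab : a < b)
    (hx : x ∈ Set.Icc a b) (h₁ : HasDerivWithinAt φ d₁ (Set.Icc a b) x)
    (h₂ : HasDerivWithinAt φ d₂ (Set.Icc a b) x) : d₁ = d₂ := by
  rw [← h₁.derivWithin ((uniqueDiffOn_Icc hab) x hx),
      h₂.derivWithin ((uniqueDiffOn_Icc hab) x hx)]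

/-- If `φ` is constant on `[x, z] ⊆ [0,1]` (`x < z`) then its derivative within `[0,1]` at `x`
is zero. -/
lemma deriv_zero_of_constOn {x z d : ℝ} {φ : ℝ → ℝ} (hx : 0 ≤ x) (hz : z ≤ 1) (hxz : x < z)
    (hφ : HasDerivWithinAt φ d (Set.Icc 0 1) x)
    (hc : ∀ t ∈ Set.Icc x z, φ t = φ x) : d = 0 := by
  have h1 : HasDerivWithinAt φ d (Set.Icc x z) x :=
    hφ.mono (Set.Icc_subset_Icc hx hz)
  have h2 : HasDerivWithinAt φ 0 (Set.Icc x z) x :=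
    (hasDerivWithinAt_const x _ (φ x)).congr hc (hc x ⟨le_refl x, hxz.le⟩)
  exact hasDerivWithinAt_Icc_unique hxz ⟨le_refl x, hxz.le⟩ h1 h2

/-- The derivative within `[0,1]` of a function nondecreasing on `[0,1]` is nonnegative. -/
lemma deriv_nonneg_of_monoOn {x d : ℝ} {φ : ℝ → ℝ} (hx : x ∈ Set.Icc (0:ℝ) 1)
    (hmono : ∀ t ∈ Set.Icc (0:ℝ) 1, ∀ t' ∈ Set.Icc (0:ℝ) 1, t ≤ t' → φ t ≤ φ t')
    (hφ : HasDerivWithinAt φ d (Set.Icc 0 1) x) : 0 ≤ d := by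
  have hs := hasDerivWithinAt_iff_tendsto_slope.mp hφ
  rcases lt_or_eq_of_le hx.2 with h1 | h1
  · have hsub : Set.Ioc x 1 ⊆ Set.Icc (0:ℝ) 1 \ {x} := fun y hy =>
      ⟨⟨hx.1.trans hy.1.le, hy.2⟩, fun hc => (ne_of_gt hy.1) hc⟩
    have ht : Filter.Tendsto (slope φ x) (nhdsWithin x (Set.Ioc x 1)) (nhds d) :=
      hs.mono_left (nhdsWithin_mono x hsub)
    rw [nhdsWithin_Ioc_eq_nhdsGT h1] at ht
    refine ge_of_tendsto ht ?_
    filter_upwards [Ioo_mem_nhdsGT_of_mem ⟨le_refl x, h1⟩] with y hy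
    rw [slope_def_field]
    exact div_nonneg
      (sub_nonneg.2 (hmono x hx y ⟨hx.1.trans hy.1.le, hy.2.le⟩ hy.1.le))
      (sub_nonneg.2 hy.1.le)
  · have h0 : (0:ℝ) < x := by rw [h1]; norm_num
    have hsub : Set.Ico 0 x ⊆ Set.Icc (0:ℝ) 1 \ {x} := fun y hy =>
      ⟨⟨hy.1, hy.2.le.trans hx.2⟩, fun hc => (ne_of_lt hy.2) hc⟩
    have ht : Filter.Tendsto (slope φ x) (nhdsWithin x (Set.Ico 0 x)) (nhds d) :=
      hs.mono_left (nhdsWithin_mono x hsub)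
    rw [nhdsWithin_Ico_eq_nhdsLT h0] at ht
    refine ge_of_tendsto ht ?_
    filter_upwards [Ioo_mem_nhdsLT_of_mem ⟨h0, le_refl x⟩] with y hy
    rw [slope_comm, slope_def_field]
    exact div_nonneg
      (sub_nonneg.2 (hmono y ⟨hy.1.le, hy.2.le.trans hx.2⟩ x hx hy.2.le))
      (sub_nonneg.2 hy.2.le)

/-- With decomposable valuations, weak monotonicity (W-Mon) of `f`
implies that the profile `v` satisfies `f`-single-crossing. -/
theorem wmon_implies_fsc_of_decomposable
    (v dv : Fin n → A → (Fin n → ℝ) → ℝ)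
    (f : (Fin n → ℝ) → A → ℝ)
    (hv : ValidVals v) (hdec : Decomposable v) (hdv : IsOwnDeriv v dv)
    (hf : IsDistr f)
    (hwmon : WMon v f) :
    FSC dv f := by
  intro i s hs z hz hsz
  obtain ⟨vh, h, g, hvh0, hh0, hhinv, hginv, hdecomp⟩ := hdec i
  have hsi : s i ∈ Set.Icc (0:ℝ) 1 := hs i
  have hupd : ∀ t ∈ Set.Icc (0:ℝ) 1, InSig (Function.update s i t) := by
    intro t ht j
    rcases eq_or_ne j i with rfl | hne
    · simpa using ht
    · simpa [Function.update_of_ne hne] using hs j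
  set sz := Function.update s i z with hszdef
  have hsz_in : InSig sz := hupd z hz
  -- the decomposition along agent i's signal
  have deq : ∀ a, ∀ t ∈ Set.Icc (0:ℝ) 1,
      v i a (Function.update s i t) = vh (Function.update s i t) * h a s + g a s := by
    intro a t ht
    rw [hdecomp a _ (hupd t ht), hhinv a s hs t ht, hginv a s hs t ht]
  have hvs : ∀ a, v i a s = vh s * h a s + g a s := fun a => hdecomp a s hs
  have hvsz : ∀ a, v i a sz = vh sz * h a s + g a s := fun a => deq a z hz
  set K := vh sz - vh s with hK
  have vdiff : ∀ a, v i a sz - v i a s = K * h a s := by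
    intro a; rw [hvs a, hvsz a, hK]; ring
  have vmono : ∀ a, v i a s ≤ v i a sz := by
    intro a
    have := hv.2 i a i s hs (s i) z hsi hz hsz.le
    rwa [Function.update_eq_self] at this
  -- monotonicity of t ↦ v i a (update s i t)
  have hmono : ∀ a, ∀ t ∈ Set.Icc (0:ℝ) 1, ∀ t' ∈ Set.Icc (0:ℝ) 1, t ≤ t' →
      v i a (Function.update s i t) ≤ v i a (Function.update s i t') :=
    fun a t ht t' ht' htt' => hv.2 i a i s hs t t' ht ht' htt'
  by_cases hcase : ∀ a, v i a sz = v i a s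
  · -- all valuations are unchanged: every derivative is 0
    have hdz : ∀ a, dv i a s = 0 := by
      intro a
      refine deriv_zero_of_constOn hsi.1 hz.2 hsz (hdv i a s hs) ?_
      intro t htz
      have ht : t ∈ Set.Icc (0:ℝ) 1 := ⟨hsi.1.trans htz.1, htz.2.trans hz.2⟩
      have h1 : v i a (Function.update s i (s i)) ≤ v i a (Function.update s i t) :=
        hmono a (s i) hsi t ht htz.1
      have h2 : v i a (Function.update s i t) ≤ v i a (Function.update s i z) :=
        hmono a t ht z hz htz.2
      rw [Function.update_eq_self] at h1
      rw [← hszdef] at h2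
      rw [hcase a] at h2
      rw [Function.update_eq_self]
      exact le_antisymm h2 h1
    simp [expVal, hdz, ge_iff_le, le_refl]
  · push_neg at hcase
    obtain ⟨a₀, ha₀⟩ := hcase
    have hhne : h a₀ s ≠ 0 := by
      intro h0
      apply ha₀
      have := vdiff a₀
      rw [h0, mul_zero, sub_eq_zero] at this
      exact this
    have hhpos : 0 < h a₀ s := lt_of_le_of_ne (hh0 a₀ s hs) (Ne.symm hhne)
    have hKpos : 0 < K := by
      have h1 : 0 ≤ K * h a₀ s := by rw [← vdiff a₀]; linarith [vmono a₀]
      have h2 : K ≠ 0 := by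
        intro h0
        exact ha₀ (by have := vdiff a₀; rw [h0, zero_mul, sub_eq_zero] at this; exact this)
      rcases lt_or_eq_of_le ((mul_nonneg_iff_of_pos_right hhpos).mp h1) with h3 | h3
      · exact h3
      · exact absurd h3.symm h2
    -- every derivative is proportional to h · s
    have hdvall : ∀ a, dv i a s = (h a s / h a₀ s) * dv i a₀ s := by
      intro a
      have hd0 : HasDerivWithinAt
          (fun t => (h a s / h a₀ s) * (v i a₀ (Function.update s i t) - g a₀ s) + g a s)
          ((h a s / h a₀ s) * dv i a₀ s) (Set.Icc 0 1) (s i) :=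
        (((hdv i a₀ s hs).sub_const (g a₀ s)).const_mul (h a s / h a₀ s)).add_const (g a s)
      have heq : ∀ t ∈ Set.Icc (0:ℝ) 1,
          v i a (Function.update s i t) =
            (h a s / h a₀ s) * (v i a₀ (Function.update s i t) - g a₀ s) + g a s := by
        intro t ht
        rw [deq a t ht, deq a₀ t ht]
        field_simp
        ring
      have hd1 : HasDerivWithinAt (fun t => v i a (Function.update s i t))
          ((h a s / h a₀ s) * dv i a₀ s) (Set.Icc 0 1) (s i) :=
        hd0.congr heq (heq (s i) hsi)
      exact hasDerivWithinAt_Icc_unique zero_lt_one hsi (hdv i a s hs) hd1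
    have hdva₀ : 0 ≤ dv i a₀ s :=
      deriv_nonneg_of_monoOn hsi (hmono a₀) (hdv i a₀ s hs)
    -- Δ := ⟨h(·,s), f(sz) - f(s)⟩ is nonnegative by W-Mon
    have hW := hwmon i s hs z hz
    rw [ge_iff_le, expVal] at hW
    have hWeq : ∑ a, (f sz a - f s a) * (v i a (Function.update s i z) - v i a s)
        = K * ∑ a, (f sz a - f s a) * h a s := by
      rw [Finset.mul_sum]
      refine Finset.sum_congr rfl fun a _ => ?_
      rw [← hszdef, vdiff a]
      ring
    rw [hWeq] at hW
    have hΔ : 0 ≤ ∑ a, (f sz a - f s a) * h a s :=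
      (mul_nonneg_iff_of_pos_left hKpos).mp hW
    rw [ge_iff_le, ← sub_nonneg, expVal, expVal, ← Finset.sum_sub_distrib]
    have hgoal : ∑ a, (f sz a * dv i a s - f s a * dv i a s)
        = (dv i a₀ s / h a₀ s) * ∑ a, (f sz a - f s a) * h a s := by
      rw [Finset.mul_sum]
      refine Finset.sum_congr rfl fun a _ => ?_
      rw [hdvall a]
      ring
    rw [hgoal]
    exact mul_nonneg (div_nonneg hdva₀ hhpos.le) hΔ
end
end

section
/- Consider an IDV social choice setting in which every valuation v_i is decomposable and continuous in its own signal s_i, and let f : S → Δ(𝒜) be a finite-valued randomized social choice function, i.e., for every agent i and every s_{-i}, the set {f(s_i, s_{-i}) : s_i ∈ S_i} ⊆ Δ(𝒜) is finite. Then f is implementable with ex-post incentive compatible payments if and only if f satisfies weak monotonicity (W-Mon). -/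
open Finset

noncomputable section

variable {n : ℕ} {A : Type*} [Fintype A]

/-- The payments `p` make `f` ex-post incentive compatible. -/
def ExPostIC (v : Fin n → A → (Fin n → ℝ) → ℝ) (f : (Fin n → ℝ) → A → ℝ)
    (p : Fin n → (Fin n → ℝ) → ℝ) : Prop :=
  ∀ i (s : Fin n → ℝ), InSig s → ∀ b ∈ Set.Icc (0 : ℝ) 1,
    expVal (fun a => v i a s) (f s) - p i s ≥
      expVal (fun a => v i a s) (f (Function.update s i b)) - p i (Function.update s i b)

/-- Each valuation is continuous in the agent's own signal. -/
def ContinuousOwn (v : Fin n → A → (Fin n → ℝ) → ℝ) : Prop :=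
  ∀ i a (s : Fin n → ℝ), InSig s →
    ContinuousOn (fun t => v i a (Function.update s i t)) (Set.Icc (0 : ℝ) 1)

/-- `f` is finite-valued: for every agent `i` and every `s₋ᵢ`, the set of distributions
`{f(sᵢ, s₋ᵢ) : sᵢ ∈ Sᵢ}` is finite. -/
def FiniteValued (f : (Fin n → ℝ) → A → ℝ) : Prop :=
  ∀ i (s : Fin n → ℝ), InSig s →
    Set.Finite ((fun t => f (Function.update s i t)) '' Set.Icc (0 : ℝ) 1)

lemma ic_to_wmon {n : ℕ} {A : Type*} [Fintype A] {v : Fin n → A → (Fin n → ℝ) → ℝ}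
    {f : (Fin n → ℝ) → A → ℝ}
    {p : Fin n → (Fin n → ℝ) → ℝ} (hIC : ExPostIC v f p) : WMon v f := by
  intro i s hs z hz
  have hs' : InSig (Function.update s i z) := insig_update hs i hz
  have h1 := hIC i s hs z hz
  have h2 := hIC i (Function.update s i z) hs' (s i) (hs i)
  rw [Function.update_idem, Function.update_eq_self] at h2
  have hexp : expVal (fun a => v i a (Function.update s i z) - v i a s)
      (fun a => f (Function.update s i z) a - f s a)
      = (expVal (fun a => v i a (Function.update s i z)) (f (Function.update s i z))
          - expVal (fun a => v i a (Function.update s i z)) (f s))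
        - (expVal (fun a => v i a s) (f (Function.update s i z))
          - expVal (fun a => v i a s) (f s)) := by
    simp only [expVal, ← Finset.sum_sub_distrib]
    exact Finset.sum_congr rfl fun a _ => by ring
  rw [hexp]
  linarith


open intervalIntegral in
lemma oneD_aux (V H : ℝ → ℝ) (M : ℝ)
    (Hmono : ∀ t ∈ Set.Icc (0:ℝ) 1, ∀ t' ∈ Set.Icc (0:ℝ) 1, V t < V t' → H t ≤ H t')
    (Hnn : ∀ t ∈ Set.Icc (0:ℝ) 1, 0 ≤ H t)
    (Hbd : ∀ t ∈ Set.Icc (0:ℝ) 1, H t ≤ M) :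
    ∀ t ∈ Set.Icc (0:ℝ) 1, ∀ b ∈ Set.Icc (0:ℝ) 1,
      (∫ x in (0:ℝ)..(V t),
          sSup (insert (0:ℝ) {y | ∃ u ∈ Set.Icc (0:ℝ) 1, V u < x ∧ y = H u}))
        - (∫ x in (0:ℝ)..(V b),
          sSup (insert (0:ℝ) {y | ∃ u ∈ Set.Icc (0:ℝ) 1, V u < x ∧ y = H u}))
        ≥ (V t - V b) * H b := by
  intro t ht b hb
  set Φ : ℝ → ℝ :=
    fun x => sSup (insert (0:ℝ) {y | ∃ u ∈ Set.Icc (0:ℝ) 1, V u < x ∧ y = H u}) with hΦ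
  have hbdd : ∀ x : ℝ, BddAbove (insert (0:ℝ) {y | ∃ u ∈ Set.Icc (0:ℝ) 1, V u < x ∧ y = H u}) := by
    intro x
    refine ⟨max 0 M, ?_⟩
    rintro y (rfl | ⟨u, hu, _, rfl⟩)
    · exact le_max_left _ _
    · exact le_max_of_le_right (Hbd u hu)
  have hmonoΦ : Monotone Φ := by
    intro x x' hx
    refine csSup_le_csSup (hbdd x') ⟨0, Set.mem_insert _ _⟩ ?_
    refine Set.insert_subset_insert ?_
    rintro y ⟨u, hu, hlt, rfl⟩
    exact ⟨u, hu, lt_of_lt_of_le hlt hx, rfl⟩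
  have hint : ∀ a c : ℝ, IntervalIntegrable Φ MeasureTheory.volume a c :=
    fun a c => hmonoΦ.intervalIntegrable
  have hsplit : (∫ x in (0:ℝ)..(V t), Φ x) - (∫ x in (0:ℝ)..(V b), Φ x)
      = ∫ x in (V b)..(V t), Φ x := by
    rw [← integral_add_adjacent_intervals (hint 0 (V b)) (hint (V b) (V t))]
    ring
  have hub : ∀ x ≤ V b, Φ x ≤ H b := by
    intro x hx
    refine csSup_le ⟨0, Set.mem_insert _ _⟩ ?_
    rintro y (rfl | ⟨u, hu, hlt, rfl⟩)
    · exact Hnn b hb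
    · exact Hmono u hu b hb (lt_of_lt_of_le hlt hx)
  have hlb : ∀ x, V b < x → H b ≤ Φ x := by
    intro x hx
    exact le_csSup (hbdd x) (Set.mem_insert_of_mem _ ⟨b, hb, hx, rfl⟩)
  rw [hsplit]
  rcases le_total (V b) (V t) with hle | hle
  · have h1 : (V t - V b) * H b = ∫ _ in (V b)..(V t), H b := by
      rw [integral_const]; simp [smul_eq_mul]
    rw [h1, ge_iff_le, integral_of_le hle, integral_of_le hle]
    exact MeasureTheory.setIntegral_mono_on (intervalIntegrable_const.1)
      ((hint (V b) (V t)).1) measurableSet_Ioc (fun x hx => hlb x hx.1)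
  · have h2 : ∫ x in (V b)..(V t), Φ x = -∫ x in (V t)..(V b), Φ x :=
      integral_symm _ _
    have h3 : (∫ x in (V t)..(V b), Φ x) ≤ (V b - V t) * H b := by
      have h1 : (V b - V t) * H b = ∫ _ in (V t)..(V b), H b := by
        rw [integral_const]; simp [smul_eq_mul]
      rw [h1, integral_of_le hle, integral_of_le hle]
      exact MeasureTheory.setIntegral_mono_on ((hint (V t) (V b)).1)
        (intervalIntegrable_const.1) measurableSet_Ioc (fun x hx => hub x hx.2)
    rw [h2]
    nlinarith

/-- With decomposable valuations that are continuous in the agent's own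
signal, a finite-valued `f` is implementable with ex-post incentive compatible payments
iff `f` satisfies weak monotonicity (W-Mon). -/
theorem implementable_iff_wmon_of_decomposable
    (v : Fin n → A → (Fin n → ℝ) → ℝ)
    (f : (Fin n → ℝ) → A → ℝ)
    (hv : ValidVals v) (hdec : Decomposable v) (hcont : ContinuousOwn v)
    (hf : IsDistr f) (hfin : FiniteValued f) :
    (∃ p : Fin n → (Fin n → ℝ) → ℝ, ExPostIC v f p) ↔ WMon v f := by
  constructor
  · rintro ⟨p, hIC⟩
    exact ic_to_wmon hIC
  · intro hW
    choose vh hF gF hvh0 hF0 hFinv hGinv hdq using hdec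
    refine ⟨fun i s =>
        expVal (fun a => gF i a s) (f s) + vh i s * expVal (fun a => hF i a s) (f s)
          - ∫ x in (0:ℝ)..(vh i s),
              sSup (insert (0:ℝ) {y | ∃ u ∈ Set.Icc (0:ℝ) 1,
                vh i (Function.update s i u) < x ∧
                y = expVal (fun a => hF i a (Function.update s i u))
                      (f (Function.update s i u))}), ?_⟩
    intro i s hs b hb
    dsimp only
    have hFs : ∀ (u : ℝ), u ∈ Set.Icc (0:ℝ) 1 → ∀ a,
        hF i a (Function.update s i u) = hF i a s := fun u hu a => hFinv i a s hs u hu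
    have hGs : ∀ (u : ℝ), u ∈ Set.Icc (0:ℝ) 1 → ∀ a,
        gF i a (Function.update s i u) = gF i a s := fun u hu a => hGinv i a s hs u hu
    have hHmono : ∀ u ∈ Set.Icc (0:ℝ) 1, ∀ u' ∈ Set.Icc (0:ℝ) 1,
        vh i (Function.update s i u) < vh i (Function.update s i u') →
        expVal (fun a => hF i a (Function.update s i u)) (f (Function.update s i u)) ≤
          expVal (fun a => hF i a (Function.update s i u')) (f (Function.update s i u')) := by
      intro u hu u' hu' hlt
      have h1 := insig_update hs i hu
      have h2 := insig_update hs i hu'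
      have hwm := hW i (Function.update s i u) h1 u' hu'
      rw [Function.update_idem] at hwm
      have hexp : expVal
          (fun a => v i a (Function.update s i u') - v i a (Function.update s i u))
          (fun a => f (Function.update s i u') a - f (Function.update s i u) a)
          = (vh i (Function.update s i u') - vh i (Function.update s i u)) *
            (expVal (fun a => hF i a (Function.update s i u')) (f (Function.update s i u'))
              - expVal (fun a => hF i a (Function.update s i u))
                  (f (Function.update s i u))) := by
        simp only [expVal]
        rw [mul_sub, Finset.mul_sum, Finset.mul_sum, ← Finset.sum_sub_distrib]
        refine Finset.sum_congr rfl fun a _ => ?_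
        rw [hdq i a _ h2, hdq i a _ h1, hFs u' hu' a, hFs u hu a, hGs u' hu' a, hGs u hu a]
        ring
      rw [hexp] at hwm
      nlinarith
    have hHnn : ∀ u ∈ Set.Icc (0:ℝ) 1,
        0 ≤ expVal (fun a => hF i a (Function.update s i u)) (f (Function.update s i u)) := by
      intro u hu
      simp only [expVal]
      exact Finset.sum_nonneg fun a _ => mul_nonneg ((hf _ (insig_update hs i hu)).1 a)
        (hF0 i a _ (insig_update hs i hu))
    have hHbd : ∀ u ∈ Set.Icc (0:ℝ) 1,
        expVal (fun a => hF i a (Function.update s i u)) (f (Function.update s i u))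
          ≤ ∑ a, hF i a s := by
      intro u hu
      have h1 := hf _ (insig_update hs i hu)
      simp only [expVal]
      refine Finset.sum_le_sum fun a _ => ?_
      rw [hFs u hu a]
      have hle1 : f (Function.update s i u) a ≤ 1 := by
        rw [← h1.2]
        exact Finset.single_le_sum (fun c _ => h1.1 c) (Finset.mem_univ a)
      have := hF0 i a s hs
      nlinarith [h1.1 a]
    have key := oneD_aux (fun u => vh i (Function.update s i u))
      (fun u => expVal (fun a => hF i a (Function.update s i u)) (f (Function.update s i u)))
      (∑ a, hF i a s) hHmono hHnn hHbd (s i) (hs i) b hb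
    simp only [Function.update_eq_self] at key
    simp only [hFs b hb] at key
    have hsetEq : (fun (x : ℝ) => sSup (insert (0:ℝ) {y | ∃ u ∈ Set.Icc (0:ℝ) 1,
          vh i (Function.update (Function.update s i b) i u) < x ∧
          y = expVal (fun a => hF i a (Function.update (Function.update s i b) i u))
                (f (Function.update (Function.update s i b) i u))}))
        = (fun (x : ℝ) => sSup (insert (0:ℝ) {y | ∃ u ∈ Set.Icc (0:ℝ) 1,
          vh i (Function.update s i u) < x ∧
          y = expVal (fun a => hF i a (Function.update s i u))
                (f (Function.update s i u))})) := by
      funext x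
      congr 1
      ext y
      simp only [Set.mem_insert_iff, Set.mem_setOf_eq, Function.update_idem]
    have hval : ∀ d : A → ℝ, expVal (fun a => v i a s) d
        = vh i s * expVal (fun a => hF i a s) d + expVal (fun a => gF i a s) d := by
      intro d
      simp only [expVal, Finset.mul_sum, ← Finset.sum_add_distrib]
      exact Finset.sum_congr rfl fun a _ => by rw [hdq i a s hs]; ring
    have hgEq : expVal (fun a => gF i a (Function.update s i b)) (f (Function.update s i b))
        = expVal (fun a => gF i a s) (f (Function.update s i b)) := by
      simp only [expVal]
      exact Finset.sum_congr rfl fun a _ => by rw [hGs b hb a]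
    have hhEq : expVal (fun a => hF i a (Function.update s i b)) (f (Function.update s i b))
        = expVal (fun a => hF i a s) (f (Function.update s i b)) := by
      simp only [expVal]
      exact Finset.sum_congr rfl fun a _ => by rw [hFs b hb a]
    rw [hval (f s), hval (f (Function.update s i b)), hsetEq, hgEq, hhEq]
    linarith [key]
end
end

section
/- Let 𝒜 be a finite nonempty set, let S = [0,1], and let v : 𝒜 × S → ℝ≥0 be such that for every a ∈ 𝒜 the map s ↦ v(a; s) is continuous and nondecreasing. Let D = {(v(a; s))_{a∈𝒜} : s ∈ S} ⊆ ℝ^𝒜 be the induced value curve. Then the closure of D is convex if and only if v is decomposable, i.e., there exist a nondecreasing function v̂ : S → ℝ≥0 and functions h : 𝒜 → ℝ≥0, g : 𝒜 → ℝ such that v(a; s) = v̂(s)·h(a) + g(a) for all a ∈ 𝒜 and s ∈ S. -/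
open Finset

noncomputable section

/-- For a single agent with signal space `S = [0,1]`, a continuous,
nondecreasing, nonnegative valuation `v : 𝒜 × S → ℝ≥0` induces the value curve
`D = {(v(a; s))_{a ∈ 𝒜} : s ∈ S} ⊆ ℝ^𝒜`. The closure of `D` is convex iff `v` is
decomposable, i.e. `v(a; s) = v̂(s)·h(a) + g(a)` with `v̂ : S → ℝ≥0` nondecreasing and
`h : 𝒜 → ℝ≥0`, `g : 𝒜 → ℝ`. -/
theorem convex_closure_iff_decomposable
    {A : Type*} [Fintype A] [Nonempty A]
    (v : A → ℝ → ℝ)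
    (hcont : ∀ a, ContinuousOn (v a) (Set.Icc 0 1))
    (hmono : ∀ a, MonotoneOn (v a) (Set.Icc 0 1))
    (hnn : ∀ a, ∀ s ∈ Set.Icc (0 : ℝ) 1, 0 ≤ v a s) :
    Convex ℝ (closure {x : A → ℝ | ∃ s ∈ Set.Icc (0 : ℝ) 1, x = fun a => v a s}) ↔
      ∃ (vh : ℝ → ℝ) (h g : A → ℝ),
        MonotoneOn vh (Set.Icc 0 1) ∧
        (∀ s ∈ Set.Icc (0 : ℝ) 1, 0 ≤ vh s) ∧
        (∀ a, 0 ≤ h a) ∧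
        (∀ a, ∀ s ∈ Set.Icc (0 : ℝ) 1, v a s = vh s * h a + g a) := by
  have h0 : (0:ℝ) ∈ Set.Icc (0:ℝ) 1 := by norm_num
  have h1 : (1:ℝ) ∈ Set.Icc (0:ℝ) 1 := by norm_num
  set D : Set (A → ℝ) := {x : A → ℝ | ∃ s ∈ Set.Icc (0 : ℝ) 1, x = fun a => v a s} with hD
  constructor
  · intro hconv
    -- D is compact hence closed, so closure D = D
    have hDeq : D = (fun s => fun a => v a s) '' Set.Icc 0 1 := by
      ext x
      simp only [hD, Set.mem_setOf_eq, Set.mem_image]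
      constructor
      · rintro ⟨s, hs, rfl⟩; exact ⟨s, hs, rfl⟩
      · rintro ⟨s, hs, rfl⟩; exact ⟨s, hs, rfl⟩
    have hFcont : ContinuousOn (fun s => fun a => v a s) (Set.Icc (0:ℝ) 1) :=
      continuousOn_pi.2 fun a => hcont a
    have hcomp : IsCompact D := by
      rw [hDeq]; exact isCompact_Icc.image_of_continuousOn hFcont
    rw [hcomp.isClosed.closure_eq] at hconv
    have hmem : ∀ s ∈ Set.Icc (0:ℝ) 1, (fun a => v a s) ∈ D := fun s hs => ⟨s, hs, rfl⟩
    -- key: every point of the curve lies on the segment between endpoints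
    have key : ∀ s ∈ Set.Icc (0:ℝ) 1, ∃ l : ℝ,
        ∀ a, v a s = v a 0 + l * (v a 1 - v a 0) := by
      intro s hs
      set T1 : Set ℝ := {l | ∀ a, v a 0 + l * (v a 1 - v a 0) ≤ v a s} with hT1
      set T2 : Set ℝ := {l | ∀ a, v a s ≤ v a 0 + l * (v a 1 - v a 0)} with hT2
      have hcl1 : IsClosed T1 := by
        have : T1 = ⋂ a, {l : ℝ | v a 0 + l * (v a 1 - v a 0) ≤ v a s} := by
          ext l; simp [hT1]
        rw [this]
        exact isClosed_iInter fun a => isClosed_le (by continuity) continuous_const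
      have hcl2 : IsClosed T2 := by
        have : T2 = ⋂ a, {l : ℝ | v a s ≤ v a 0 + l * (v a 1 - v a 0)} := by
          ext l; simp [hT2]
        rw [this]
        exact isClosed_iInter fun a => isClosed_le continuous_const (by continuity)
      have hcover : Set.Icc (0:ℝ) 1 ⊆ T1 ∪ T2 := by
        intro l hl
        have hseg : ((1 - l) • (fun a => v a 0) + l • (fun a => v a 1) : A → ℝ) ∈ D :=
          hconv (hmem 0 h0) (hmem 1 h1) (by linarith [hl.2]) hl.1 (by ring)
        obtain ⟨t, ht, hteq⟩ := hseg
        have hpt : ∀ a, v a 0 + l * (v a 1 - v a 0) = v a t := by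
          intro a
          have := congrFun hteq a
          simp only [Pi.add_apply, Pi.smul_apply, smul_eq_mul] at this
          linarith [this]
        rcases le_total t s with hts | hst
        · left; intro a; rw [hpt a]; exact hmono a ht hs hts
        · right; intro a; rw [hpt a]; exact hmono a hs ht hst
      have hne1 : (Set.Icc (0:ℝ) 1 ∩ T1).Nonempty := by
        refine ⟨0, h0, fun a => ?_⟩
        simpa using hmono a h0 hs hs.1
      have hne2 : (Set.Icc (0:ℝ) 1 ∩ T2).Nonempty := by
        refine ⟨1, h1, fun a => ?_⟩
        have := hmono a hs h1 hs.2
        nlinarith [this]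
      obtain ⟨l, _, hl1, hl2⟩ :=
        isPreconnected_closed_iff.mp isPreconnected_Icc T1 T2 hcl1 hcl2 hcover hne1 hne2
      exact ⟨l, fun a => le_antisymm (hl2 a) (hl1 a)⟩
    by_cases hc : ∀ a, v a 1 = v a 0
    · -- constant curve
      refine ⟨fun _ => 0, fun _ => 0, fun a => v a 0, monotoneOn_const, fun _ _ => le_rfl,
        fun _ => le_rfl, fun a s hs => ?_⟩
      obtain ⟨l, hl⟩ := key s hs
      have := hl a
      rw [hc a] at this
      simp at this ⊢
      linarith
    · push_neg at hc
      obtain ⟨a₀, ha₀⟩ := hc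
      have hd : 0 < v a₀ 1 - v a₀ 0 :=
        lt_of_le_of_ne (by linarith [hmono a₀ h0 h1 zero_le_one]) (by intro h; exact ha₀ (by linarith))
      refine ⟨fun s => (v a₀ s - v a₀ 0) / (v a₀ 1 - v a₀ 0),
        fun a => v a 1 - v a 0, fun a => v a 0, ?_, ?_, ?_, ?_⟩
      · intro x hx y hy hxy
        have := hmono a₀ hx hy hxy
        apply div_le_div_of_nonneg_right _ hd.le
        linarith
      · intro s hs
        have := hmono a₀ h0 hs hs.1
        exact div_nonneg (by linarith) hd.le
      · intro a
        show (0:ℝ) ≤ v a 1 - v a 0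
        linarith [hmono a h0 h1 zero_le_one]
      · intro a s hs
        obtain ⟨l, hl⟩ := key s hs
        have hla : v a s = v a 0 + l * (v a 1 - v a 0) := hl a
        have hl0 : v a₀ s = v a₀ 0 + l * (v a₀ 1 - v a₀ 0) := hl a₀
        have hlval : (v a₀ s - v a₀ 0) / (v a₀ 1 - v a₀ 0) = l := by
          field_simp
          linarith
        show v a s = (v a₀ s - v a₀ 0) / (v a₀ 1 - v a₀ 0) * (v a 1 - v a 0) + v a 0
        rw [hlval]; linarith
  · rintro ⟨vh, h, g, hvhmono, hvhnn, hhnn, heq⟩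
    apply Convex.closure
    intro x hx y hy μ ν hμ hν hμν
    obtain ⟨s, hs, rfl⟩ := hx
    obtain ⟨t, ht, rfl⟩ := hy
    by_cases hz : ∀ a, h a = 0
    · refine ⟨s, hs, ?_⟩
      funext a
      simp only [Pi.add_apply, Pi.smul_apply, smul_eq_mul]
      rw [heq a s hs, heq a t ht, hz a]
      linear_combination g a * hμν
    · push_neg at hz
      obtain ⟨a₀, ha₀⟩ := hz
      have hapos : 0 < h a₀ := lt_of_le_of_ne (hhnn a₀) (Ne.symm ha₀)
      -- helper: realize intermediate value of vh
      have helper : ∀ p q : ℝ, p ∈ Set.Icc (0:ℝ) 1 → q ∈ Set.Icc (0:ℝ) 1 → p ≤ q →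
          ∀ c, c ∈ Set.Icc (vh p) (vh q) → ∃ u ∈ Set.Icc (0:ℝ) 1, vh u = c := by
        intro p q hp hq hpq c hc
        set w : ℝ → ℝ := fun u => (v a₀ u - g a₀) / h a₀ with hw
        have hweq : ∀ u ∈ Set.Icc (0:ℝ) 1, w u = vh u := by
          intro u hu
          rw [hw]
          simp only
          rw [heq a₀ u hu]
          field_simp
          ring
        have hwc : ContinuousOn w (Set.Icc p q) := by
          apply ContinuousOn.div_const
          apply ContinuousOn.sub _ continuousOn_const
          exact (hcont a₀).mono (Set.Icc_subset_Icc hp.1 hq.2)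
        have := intermediate_value_Icc hpq hwc
        have hcm : c ∈ Set.Icc (w p) (w q) := by
          rw [hweq p hp, hweq q hq]; exact hc
        obtain ⟨u, hu, huc⟩ := this hcm
        have hu01 : u ∈ Set.Icc (0:ℝ) 1 := Set.Icc_subset_Icc hp.1 hq.2 hu
        exact ⟨u, hu01, by rw [← hweq u hu01, huc]⟩
      have hget : ∃ u ∈ Set.Icc (0:ℝ) 1, vh u = μ * vh s + ν * vh t := by
        rcases le_total s t with hst | hts
        · have hv : vh s ≤ vh t := hvhmono hs ht hst
          have e1 : μ * vh s + ν * vh s = vh s := by linear_combination vh s * hμν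
          have e2 : μ * vh t + ν * vh t = vh t := by linear_combination vh t * hμν
          exact helper s t hs ht hst _
            ⟨by linarith [e1, mul_le_mul_of_nonneg_left hv hν],
             by linarith [e2, mul_le_mul_of_nonneg_left hv hμ]⟩
        · have hv : vh t ≤ vh s := hvhmono ht hs hts
          have e1 : μ * vh t + ν * vh t = vh t := by linear_combination vh t * hμν
          have e2 : μ * vh s + ν * vh s = vh s := by linear_combination vh s * hμν
          exact helper t s ht hs hts _
            ⟨by linarith [e1, mul_le_mul_of_nonneg_left hv hμ],
             by linarith [e2, mul_le_mul_of_nonneg_left hv hν]⟩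
      obtain ⟨u, hu, huc⟩ := hget
      refine ⟨u, hu, ?_⟩
      funext a
      simp only [Pi.add_apply, Pi.smul_apply, smul_eq_mul]
      rw [heq a s hs, heq a t ht, heq a u hu, huc]
      linear_combination g a * hμν
end
end

section
/- Let 𝒜 be a finite nonempty set, let S = [0,1], and let v : 𝒜 × S → ℝ≥0 be such that for every a ∈ 𝒜 the map s ↦ v(a; s) is continuous and nondecreasing. Suppose the closure of the induced value curve D = {(v(a; s))_{a∈𝒜} : s ∈ S} ⊆ ℝ^𝒜 is convex. Then for every two signals s < s' in S and every t ∈ [s, s'], there exists λ ∈ [0,1] such that v(a; t) = (1 − λ)·v(a; s) + λ·v(a; s') for every a ∈ 𝒜. -/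
open Finset

noncomputable section

/-- For a single agent with signal space `S = [0,1]` and a continuous,
nondecreasing, nonnegative valuation `v : 𝒜 × S → ℝ≥0`, if the closure of the induced
value curve `D = {(v(a; s))_{a ∈ 𝒜} : s ∈ S} ⊆ ℝ^𝒜` is convex, then for all signals
`s < s'` in `[0,1]` and every `t ∈ [s, s']` there is `λ ∈ [0,1]` with
`v(a; t) = (1 − λ)·v(a; s) + λ·v(a; s')` for every `a`. -/
theorem convex_closure_interpolation
    {A : Type*} [Fintype A] [Nonempty A]
    (v : A → ℝ → ℝ)
    (hcont : ∀ a, ContinuousOn (v a) (Set.Icc 0 1))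
    (hmono : ∀ a, MonotoneOn (v a) (Set.Icc 0 1))
    (hnn : ∀ a, ∀ s ∈ Set.Icc (0 : ℝ) 1, 0 ≤ v a s)
    (hconv : Convex ℝ
      (closure {x : A → ℝ | ∃ s ∈ Set.Icc (0 : ℝ) 1, x = fun a => v a s})) :
    ∀ s ∈ Set.Icc (0 : ℝ) 1, ∀ s' ∈ Set.Icc (0 : ℝ) 1, s < s' →
      ∀ t ∈ Set.Icc s s', ∃ l ∈ Set.Icc (0 : ℝ) 1,
        ∀ a, v a t = (1 - l) * v a s + l * v a s' := by
  intro s hs s' hs' hss' t ht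
  set D : Set (A → ℝ) := {x : A → ℝ | ∃ s ∈ Set.Icc (0 : ℝ) 1, x = fun a => v a s} with hD
  -- D is the image of [0,1] under a continuous map, hence compact, hence closed.
  have hf : ContinuousOn (fun u => fun a => v a u : ℝ → A → ℝ) (Set.Icc 0 1) := by
    apply continuousOn_pi.2
    intro a; exact hcont a
  have hDimg : D = (fun u => fun a => v a u) '' Set.Icc 0 1 := by
    ext x
    constructor
    · rintro ⟨u, hu, rfl⟩; exact ⟨u, hu, rfl⟩
    · rintro ⟨u, hu, rfl⟩; exact ⟨u, hu, rfl⟩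
  have hDcompact : IsCompact D := by
    rw [hDimg]; exact isCompact_Icc.image_of_continuousOn hf
  have hDclosed : closure D = D := hDcompact.isClosed.closure_eq
  have ht01 : t ∈ Set.Icc (0 : ℝ) 1 := ⟨le_trans hs.1 ht.1, le_trans ht.2 hs'.2⟩
  -- key: if sums are equal and u ≤ w then equal coordinatewise
  have key : ∀ u ∈ Set.Icc (0 : ℝ) 1, ∀ w ∈ Set.Icc (0 : ℝ) 1, u ≤ w →
      (∑ a, v a u) = (∑ a, v a w) → ∀ a, v a u = v a w := by
    intro u hu w hw huw hsum a
    have hle : ∀ a ∈ Finset.univ, v a u ≤ v a w := fun a _ => hmono a hu hw huw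
    exact (Finset.sum_eq_sum_iff_of_le hle).1 hsum a (Finset.mem_univ a)
  have hσst : (∑ a, v a s) ≤ ∑ a, v a t :=
    Finset.sum_le_sum (fun a _ => hmono a hs ht01 ht.1)
  have hσts' : (∑ a, v a t) ≤ ∑ a, v a s' :=
    Finset.sum_le_sum (fun a _ => hmono a ht01 hs' ht.2)
  rcases eq_or_lt_of_le (le_trans hσst hσts') with heq | hlt
  · -- sums at s and s' agree; then v a t = v a s for all a
    refine ⟨0, ⟨le_refl 0, zero_le_one⟩, fun a => ?_⟩
    have h1 : ∀ a, v a s = v a t := key s hs t ht01 ht.1 (le_antisymm hσst (heq ▸ hσts'))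
    rw [← h1 a]; ring
  · -- sums differ; define l
    set Ds := ∑ a, v a s
    set Ds' := ∑ a, v a s'
    set Dt := ∑ a, v a t
    set l := (Dt - Ds) / (Ds' - Ds) with hl
    have hne : Ds' - Ds ≠ 0 := ne_of_gt (sub_pos.2 hlt)
    have hl0 : 0 ≤ l := div_nonneg (sub_nonneg.2 hσst) (le_of_lt (sub_pos.2 hlt))
    have hl1 : l ≤ 1 := by
      rw [hl, div_le_one (sub_pos.2 hlt)]
      linarith
    -- the convex combination z lies in closure D = D
    have hxs : (fun a => v a s) ∈ closure D := subset_closure ⟨s, hs, rfl⟩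
    have hxs' : (fun a => v a s') ∈ closure D := subset_closure ⟨s', hs', rfl⟩
    have hz : (1 - l) • (fun a => v a s) + l • (fun a => v a s') ∈ closure D :=
      hconv hxs hxs' (by linarith) hl0 (by ring)
    rw [hDclosed] at hz
    obtain ⟨u, hu, hzu⟩ := hz
    -- hzu : (fun a => v a u) = (1-l) • xs + l • xs'
    have hzu' : ∀ a, v a u = (1 - l) * v a s + l * v a s' := by
      intro a
      simpa using (congrFun hzu a).symm
    -- sum of z equals Dt
    have hsumu : (∑ a, v a u) = Dt := by
      have : (∑ a, v a u) = (1 - l) * Ds + l * Ds' := by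
        rw [Finset.sum_congr rfl (fun a _ => hzu' a), Finset.sum_add_distrib,
          ← Finset.mul_sum, ← Finset.mul_sum]
      rw [this, hl]
      field_simp
      ring
    refine ⟨l, ⟨hl0, hl1⟩, fun a => ?_⟩
    rcases le_total u t with hut | htu
    · have := key u hu t ht01 hut (by rw [hsumu])
      rw [← this a, hzu' a]
    · have := key t ht01 u hu htu (by rw [hsumu])
      rw [this a, hzu' a]
end
end

section
/- Fix n agents with signal spaces S_i = [0,1], a finite nonempty set 𝒜 of alternatives, and separable valuations v_i(a; s) = h_i(a; s_i) + g_{-i}(a; s_{-i}) with h_i, g_{-i} ≥ 0 and nondecreasing. Fix a subset A ⊆ [n]. For i ∉ A define the surrogate w_i(a; s_i, s_A) = v_i(a; s') where s' agrees with s on {i} ∪ A and is 0 on all other coordinates. Let a* : S → 𝒜 be any selection satisfying a*(s) ∈ argmax_{a∈𝒜} Σ_{i∉A} w_i(a; s_i, s_A) for every s, and define, for i ∉ A, the payment p_i(s) = (g_{-i}(a*(s); s_{-i}) − g_{-i}(a*(s); s'') ) − Σ_{i'∉A∪{i}} w_{i'}(a*(s); s_{i'}, s_A) + max_{a∈𝒜}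 Σ_{i'∉A∪{i}} w_{i'}(a; s_{i'}, s_A), where s'' agrees with s_{-i} on A and is 0 on all coordinates of [n]∖(A∪{i}); agents i ∈ A receive value 0 and pay 0. Then this A-exclusion-VCG mechanism is ex-post IC-IR: for every agent i ∉ A, every true signal profile s and every report b_i ∈ S_i, v_i(a*(s); s) − p_i(s) ≥ v_i(a*(b_i, s_{-i}); s) − p_i(b_i, s_{-i}) and v_i(a*(s); s) − p_i(s) ≥ 0, and every agent i ∈ A is trivially truthful since her utility is 0 for every report. -/
open Finset

noncomputable section

variable {n : ℕ} {Alt : Type*} [Fintype Alt] [Nonempty Alt]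

/-- The separable valuation `v i a s = h i a (s i) + g i a s` (where `g i a` depends only
on the signals of the agents other than `i`). -/
def sepV (h : Fin n → Alt → ℝ → ℝ) (g : Fin n → Alt → (Fin n → ℝ) → ℝ)
    (i : Fin n) (a : Alt) (s : Fin n → ℝ) : ℝ :=
  h i a (s i) + g i a s

/-- `maskS A i s` agrees with `s` on `{i} ∪ A` and is `0` on all other coordinates. -/
def maskS (A : Finset (Fin n)) (i : Fin n) (s : Fin n → ℝ) : Fin n → ℝ :=
  fun j => if j = i ∨ j ∈ A then s j else 0

/-- The surrogate valuation `w_i(a; s_i, s_A) = v_i(a; s')` where `s'` agrees with `s` on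
`{i} ∪ A` and is `0` elsewhere. -/
def surW (h : Fin n → Alt → ℝ → ℝ) (g : Fin n → Alt → (Fin n → ℝ) → ℝ)
    (A : Finset (Fin n)) (i : Fin n) (a : Alt) (s : Fin n → ℝ) : ℝ :=
  sepV h g i a (maskS A i s)

/-- The `A`-exclusion-VCG payment of agent `i ∉ A`. -/
def exclPay (h : Fin n → Alt → ℝ → ℝ) (g : Fin n → Alt → (Fin n → ℝ) → ℝ)
    (A : Finset (Fin n)) (astar : (Fin n → ℝ) → Alt) (i : Fin n) (s : Fin n → ℝ) : ℝ :=
  (g i (astar s) s - g i (astar s) (maskS A i s)) -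
    ∑ i' ∈ Aᶜ.erase i, surW h g A i' (astar s) s +
    Finset.univ.sup' Finset.univ_nonempty
      (fun a : Alt => ∑ i' ∈ Aᶜ.erase i, surW h g A i' a s)

/-- The value of agent `i` in the `A`-exclusion-VCG mechanism: excluded agents obtain
value `0` from the chosen project. -/
def exclVal (h : Fin n → Alt → ℝ → ℝ) (g : Fin n → Alt → (Fin n → ℝ) → ℝ)
    (A : Finset (Fin n)) (i : Fin n) (a : Alt) (s : Fin n → ℝ) : ℝ :=
  if i ∈ A then 0 else sepV h g i a s

/-- The payment of agent `i` in the `A`-exclusion-VCG mechanism: excluded agents pay `0`. -/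
def exclPay' (h : Fin n → Alt → ℝ → ℝ) (g : Fin n → Alt → (Fin n → ℝ) → ℝ)
    (A : Finset (Fin n)) (astar : (Fin n → ℝ) → Alt) (i : Fin n) (s : Fin n → ℝ) : ℝ :=
  if i ∈ A then 0 else exclPay h g A astar i s

lemma maskS_update_self (A : Finset (Fin n)) (i : Fin n) (s : Fin n → ℝ) (b : ℝ) :
    maskS A i (Function.update s i b) = Function.update (maskS A i s) i b := by
  funext j
  by_cases hj : j = i
  · subst hj; simp [maskS]
  · simp [maskS, Function.update_of_ne hj, hj]

lemma maskS_update_other {A : Finset (Fin n)} {i i' : Fin n} (hiA : i ∉ A) (hii' : i ≠ i')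
    (s : Fin n → ℝ) (b : ℝ) :
    maskS A i' (Function.update s i b) = maskS A i' s := by
  funext j
  by_cases hj : j = i
  · subst hj
    simp [maskS, hii', hiA]
  · simp [maskS, Function.update_of_ne hj]

lemma inSig_maskS {s : Fin n → ℝ} (hs : InSig s) (A : Finset (Fin n)) (i : Fin n) :
    InSig (maskS A i s) := by
  intro j
  unfold maskS
  by_cases hj : j = i ∨ j ∈ A
  · simpa [hj] using hs j
  · simp [hj]

lemma surW_eq (h : Fin n → Alt → ℝ → ℝ) (g : Fin n → Alt → (Fin n → ℝ) → ℝ)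
    (A : Finset (Fin n)) (i : Fin n) (a : Alt) (s : Fin n → ℝ) :
    surW h g A i a s = h i a (s i) + g i a (maskS A i s) := by
  unfold surW sepV
  congr 1
  simp [maskS]

lemma surW_update_self (h : Fin n → Alt → ℝ → ℝ) (g : Fin n → Alt → (Fin n → ℝ) → ℝ)
    (hgind : ∀ i a (s : Fin n → ℝ), ∀ t : ℝ, g i a (Function.update s i t) = g i a s)
    (A : Finset (Fin n)) (i : Fin n) (a : Alt) (s : Fin n → ℝ) (b : ℝ) :
    surW h g A i a (Function.update s i b) = h i a b + g i a (maskS A i s) := by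
  rw [surW_eq, maskS_update_self, hgind, Function.update_self]

lemma surW_update_other (h : Fin n → Alt → ℝ → ℝ) (g : Fin n → Alt → (Fin n → ℝ) → ℝ)
    {A : Finset (Fin n)} {i i' : Fin n} (hiA : i ∉ A) (hii' : i ≠ i')
    (a : Alt) (s : Fin n → ℝ) (b : ℝ) :
    surW h g A i' a (Function.update s i b) = surW h g A i' a s := by
  unfold surW
  rw [maskS_update_other hiA hii']

/-- The `A`-exclusion-VCG mechanism for separable valuations is ex-post
IC-IR: non-excluded agents are truthful and individually rational, and excluded agents
(whose value and payment are `0`) are trivially truthful. -/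
theorem A_exclusion_VCG_truthful
    (h : Fin n → Alt → ℝ → ℝ) (g : Fin n → Alt → (Fin n → ℝ) → ℝ)
    (hh0 : ∀ i a, ∀ t ∈ Set.Icc (0 : ℝ) 1, 0 ≤ h i a t)
    (hhmono : ∀ i a, MonotoneOn (h i a) (Set.Icc 0 1))
    (hg0 : ∀ i a (s : Fin n → ℝ), InSig s → 0 ≤ g i a s)
    (hgmono : ∀ i a (j : Fin n) (s : Fin n → ℝ), InSig s → ∀ t t' : ℝ,
      t ∈ Set.Icc (0 : ℝ) 1 → t' ∈ Set.Icc (0 : ℝ) 1 → t ≤ t' →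
      g i a (Function.update s j t) ≤ g i a (Function.update s j t'))
    (hgind : ∀ i a (s : Fin n → ℝ), ∀ t : ℝ, g i a (Function.update s i t) = g i a s)
    (A : Finset (Fin n))
    (astar : (Fin n → ℝ) → Alt)
    (hastar : ∀ s : Fin n → ℝ, InSig s → ∀ a : Alt,
      ∑ i ∈ Aᶜ, surW h g A i a s ≤ ∑ i ∈ Aᶜ, surW h g A i (astar s) s) :
    ∀ (i : Fin n) (s : Fin n → ℝ), InSig s →
      (∀ b ∈ Set.Icc (0 : ℝ) 1,
        exclVal h g A i (astar s) s - exclPay' h g A astar i s ≥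
          exclVal h g A i (astar (Function.update s i b)) s -
            exclPay' h g A astar i (Function.update s i b)) ∧
      exclVal h g A i (astar s) s - exclPay' h g A astar i s ≥ 0 := by
  intro i s hs
  by_cases hiA : i ∈ A
  · refine ⟨fun b _ => ?_, ?_⟩ <;> simp [exclVal, exclPay', hiA]
  · have hiAc : i ∈ Aᶜ := Finset.mem_compl.mpr hiA
    set M : ℝ := Finset.univ.sup' Finset.univ_nonempty
      (fun a : Alt => ∑ i' ∈ Aᶜ.erase i, surW h g A i' a s) with hM
    have key : ∀ b : ℝ,
        exclVal h g A i (astar (Function.update s i b)) s -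
          exclPay' h g A astar i (Function.update s i b)
        = (∑ i' ∈ Aᶜ, surW h g A i' (astar (Function.update s i b)) s) - M := by
      intro b
      set s' := Function.update s i b with hs'
      set a' := astar s' with ha'
      have hsum : ∀ a : Alt, ∑ i' ∈ Aᶜ.erase i, surW h g A i' a s'
          = ∑ i' ∈ Aᶜ.erase i, surW h g A i' a s := by
        intro a
        refine Finset.sum_congr rfl fun i' hi' => ?_
        exact surW_update_other h g hiA ((Finset.mem_erase.mp hi').1.symm) a s b
      have hMs : Finset.univ.sup' Finset.univ_nonempty
          (fun a : Alt => ∑ i' ∈ Aᶜ.erase i, surW h g A i' a s') = M := by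
        rw [hM]; congr 1; funext a; exact hsum a
      have hg1 : g i a' s' = g i a' s := hgind i a' s b
      have hg2 : g i a' (maskS A i s') = g i a' (maskS A i s) := by
        rw [hs', maskS_update_self, hgind]
      have hsplit : ∑ i' ∈ Aᶜ, surW h g A i' a' s
          = surW h g A i a' s + ∑ i' ∈ Aᶜ.erase i, surW h g A i' a' s :=
        (Finset.add_sum_erase Aᶜ _ hiAc).symm
      simp only [exclVal, exclPay', exclPay, if_neg hiA]
      rw [hMs, hsum a', hg1, hg2, hsplit, surW_eq h g A i a' s]
      unfold sepV
      ring
    have keyt : exclVal h g A i (astar s) s - exclPay' h g A astar i s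
        = (∑ i' ∈ Aᶜ, surW h g A i' (astar s) s) - M := by
      have := key (s i)
      rwa [Function.update_eq_self] at this
    constructor
    · intro b _
      rw [keyt, key b]
      have := hastar s hs (astar (Function.update s i b))
      linarith
    · rw [keyt]
      have hMle : M ≤ ∑ i' ∈ Aᶜ, surW h g A i' (astar s) s := by
        apply Finset.sup'_le
        intro a _
        have h0 : 0 ≤ surW h g A i a s := by
          rw [surW_eq]
          have h1 := hh0 i a (s i) (hs i)
          have h2 := hg0 i a _ (inSig_maskS hs A i)
          linarith
        have h1 : ∑ i' ∈ Aᶜ.erase i, surW h g A i' a s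
            ≤ ∑ i' ∈ Aᶜ, surW h g A i' a s := by
          rw [← Finset.add_sum_erase Aᶜ _ hiAc]
          linarith
        exact h1.trans (hastar s hs a)
      linarith
end
end
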